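/- Let B be an n×n upper bidiagonal matrix with positive diagonal entries a_k and positive superdiagonal entries b_k, and let q_k = a_k², e_k = b_k². With L unit lower bidiagonal with subdiagonal (e_k) and U upper bidiagonal with diagonal (q_k) and superdiagonal 1, there is a diagonal matrix Δ = diag(1, π_1, π_1π_2, …, π_1⋯π_{n-1}) with π_i = a_i·b_i such that L·U = Δ·Bᵀ·B·Δ^{-1}. In particular L·U and Bᵀ·B have the same eigenvalues. -/

import Mathlib

open Matrix

/-- The `n×n` upper bidiagonal matrix with diagonal `a` and superdiagonal `b`. -/
def upperBidiagonal (n : ℕ) (a b : ℕ → ℝ) : Matrix (Fin n) (Fin n) ℝ :=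
  Matrix.of fun i j => if (j : ℕ) = (i : ℕ) then a i
    else if (j : ℕ) = (i : ℕ) + 1 then b i else 0

/-- Unit lower bidiagonal matrix with subdiagonal entries `e`. -/
def unitLowerBidiagonal (n : ℕ) (e : ℕ → ℝ) : Matrix (Fin n) (Fin n) ℝ :=
  Matrix.of fun i j => if (i : ℕ) = (j : ℕ) then 1
    else if (i : ℕ) = (j : ℕ) + 1 then e j else 0

/-- Upper bidiagonal matrix with diagonal `q` and superdiagonal entries all `1`. -/
def upperBidiagonalU (n : ℕ) (q : ℕ → ℝ) : Matrix (Fin n) (Fin n) ℝ :=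
  Matrix.of fun i j => if (j : ℕ) = (i : ℕ) then q i
    else if (j : ℕ) = (i : ℕ) + 1 then 1 else 0

/-- splitting a bidiagonal-pattern sum into diagonal and shifted part. -/
lemma LU_aux_sum_split {n : ℕ} (c d g : Fin n → ℝ) (i : Fin n) :
    ∑ k : Fin n, (if (i:ℕ) = (k:ℕ) then c k else if (i:ℕ) = (k:ℕ)+1 then d k else 0) * g k
    = c i * g i + ∑ k : Fin n, (if (i:ℕ) = (k:ℕ)+1 then d k * g k else 0) := by
  have : ∀ k : Fin n,
      (if (i:ℕ) = (k:ℕ) then c k else if (i:ℕ) = (k:ℕ)+1 then d k else 0) * g k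
      = (if i = k then c k * g k else 0) + (if (i:ℕ) = (k:ℕ)+1 then d k * g k else 0) := by
    intro k
    by_cases h : (i:ℕ) = (k:ℕ)
    · have hik : i = k := Fin.ext h
      rw [if_pos h, if_pos hik, if_neg (by omega), add_zero]
    · have hik : i ≠ k := fun hh => h (congrArg _ hh)
      rw [if_neg h, if_neg hik, zero_add]
      split_ifs <;> ring
  simp_rw [this, Finset.sum_add_distrib, Finset.sum_ite_eq, Finset.mem_univ, if_true]

lemma LU_aux_shift_zero {n : ℕ} (f : Fin n → ℝ) (i : Fin n) (hi : (i:ℕ) = 0) :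
    ∑ k : Fin n, (if (i:ℕ) = (k:ℕ)+1 then f k else 0) = 0 := by
  apply Finset.sum_eq_zero
  intro k _
  rw [if_neg]; omega

lemma LU_aux_shift_succ {n : ℕ} (f : Fin n → ℝ) (i k0 : Fin n) (h : (i:ℕ) = (k0:ℕ)+1) :
    ∑ k : Fin n, (if (i:ℕ) = (k:ℕ)+1 then f k else 0) = f k0 := by
  have : ∀ k : Fin n, (if (i:ℕ) = (k:ℕ)+1 then f k else 0) = if k = k0 then f k else 0 := by
    intro k
    by_cases hk : k = k0
    · subst hk; rw [if_pos h, if_pos rfl]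
    · rw [if_neg hk, if_neg (fun hh => hk (Fin.ext (by omega)))]
  simp_rw [this, Finset.sum_ite_eq', Finset.mem_univ, if_true]

/-- `L*U` is diagonally similar to `Bᵀ*B`, hence they have the same eigenvalues. -/
theorem LU_similar_BtB (n : ℕ) (hn : 0 < n) (a b q e : ℕ → ℝ)
    (ha : ∀ k < n, 0 < a k) (hb : ∀ k, k + 1 < n → 0 < b k)
    (hq : ∀ k, q k = (a k) ^ 2) (he : ∀ k, e k = (b k) ^ 2) :
    let B := upperBidiagonal n a b
    let L := unitLowerBidiagonal n e
    let U := upperBidiagonalU n q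
    let Δ : Matrix (Fin n) (Fin n) ℝ :=
      Matrix.diagonal fun i => ∏ j ∈ Finset.range (i : ℕ), (a j * b j)
    L * U = Δ * (Bᵀ * B) * Δ⁻¹ ∧ spectrum ℝ (L * U) = spectrum ℝ (Bᵀ * B) := by
  intro B L U Δ
  set dd : Fin n → ℝ := fun i => ∏ j ∈ Finset.range (i : ℕ), (a j * b j) with hdd
  -- positivity of the diagonal entries
  have hddpos : ∀ i : Fin n, 0 < dd i := by
    intro i
    apply Finset.prod_pos
    intro j hj
    rw [Finset.mem_range] at hj
    have hj1 : j + 1 < n := by omega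
    exact mul_pos (ha j (by omega)) (hb j hj1)
  -- key identity : (L*U) * Δ = Δ * (Bᵀ*B)
  have key : (L * U) * Δ = Δ * (Bᵀ * B) := by
    ext i j
    rw [show Δ = Matrix.diagonal dd from rfl, Matrix.mul_diagonal, Matrix.diagonal_mul,
      Matrix.mul_apply, Matrix.mul_apply]
    simp only [Matrix.transpose_apply]
    have hL : ∀ k : Fin n, L i k = if (i:ℕ) = (k:ℕ) then (1:ℝ)
        else if (i:ℕ) = (k:ℕ)+1 then e k else 0 := fun k => rfl
    have hB : ∀ k : Fin n, B k i = if (i:ℕ) = (k:ℕ) then a k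
        else if (i:ℕ) = (k:ℕ)+1 then b k else 0 := fun k => rfl
    simp_rw [hL, hB]
    rw [LU_aux_sum_split (fun _ => (1:ℝ)) (fun k => e k) (fun k => U k j) i]
    rw [LU_aux_sum_split (fun k => a k) (fun k => b k) (fun k => B k j) i]
    have hU : ∀ k : Fin n, U k j = if (j:ℕ) = (k:ℕ) then q k
        else if (j:ℕ) = (k:ℕ)+1 then 1 else 0 := fun k => rfl
    have hBj : ∀ k : Fin n, B k j = if (j:ℕ) = (k:ℕ) then a k
        else if (j:ℕ) = (k:ℕ)+1 then b k else 0 := fun k => rfl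
    rcases Nat.eq_zero_or_pos (i:ℕ) with hi0 | hipos
    · rw [LU_aux_shift_zero _ i hi0, LU_aux_shift_zero _ i hi0]
      rw [hU i, hBj i]
      rcases eq_or_ne (j:ℕ) (i:ℕ) with hji | hji
      · have : j = i := Fin.ext hji
        subst this
        simp [hq, hdd]
        ring
      · rw [if_neg hji, if_neg hji]
        rcases eq_or_ne (j:ℕ) ((i:ℕ)+1) with hji1 | hji1
        · rw [if_pos hji1, if_pos hji1]
          have : dd j = dd i * (a i * b i) := by
            simp only [hdd]; rw [hji1, Finset.prod_range_succ]
          rw [this]; ring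
        · rw [if_neg hji1, if_neg hji1]; ring
    · -- positive case: i = k0 + 1
      have hk0lt : (i:ℕ) - 1 < n := by omega
      set k0 : Fin n := ⟨(i:ℕ) - 1, hk0lt⟩ with hk0
      have hik0 : (i:ℕ) = (k0:ℕ) + 1 := by simp [hk0]; omega
      rw [LU_aux_shift_succ _ i k0 hik0, LU_aux_shift_succ _ i k0 hik0]
      rw [hU i, hU k0, hBj i, hBj k0]
      have hdi : dd i = dd k0 * (a k0 * b k0) := by
        simp only [hdd]; rw [hik0, Finset.prod_range_succ]
      rcases eq_or_ne (j:ℕ) (i:ℕ) with hji | hji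
      · -- diagonal
        have : j = i := Fin.ext hji
        subst this
        rw [if_pos rfl, if_pos rfl, if_neg (by omega), if_pos hik0, if_neg (by omega),
          if_pos hik0]
        simp [hq, he]; ring
      · rw [if_neg hji, if_neg hji]
        rcases eq_or_ne (j:ℕ) ((i:ℕ)+1) with hji1 | hji1
        · -- superdiagonal
          rw [if_pos hji1, if_neg (by omega), if_neg (by omega), if_pos hji1,
            if_neg (by omega), if_neg (by omega)]
          have : dd j = dd i * (a i * b i) := by
            simp only [hdd]; rw [hji1, Finset.prod_range_succ]
          rw [this]; ring
        · rw [if_neg hji1, if_neg hji1]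
          rcases eq_or_ne (j:ℕ) ((k0:ℕ)) with hjk0 | hjk0
          · -- subdiagonal: j = k0, i = j+1
            have : j = k0 := Fin.ext hjk0
            subst this
            rw [if_pos rfl, if_pos rfl]
            rw [hdi, hq, he]; ring
          · rw [if_neg hjk0, if_neg hjk0, if_neg (by omega), if_neg (by omega)]
            ring
  -- Δ is invertible
  have hdet : IsUnit Δ.det := by
    have : Δ.det = ∏ i, dd i := Matrix.det_diagonal
    rw [this]
    exact (Finset.prod_pos (fun i _ => hddpos i)).ne'.isUnit
  have hunit : IsUnit Δ := (Matrix.isUnit_iff_isUnit_det Δ).mpr hdet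
  obtain ⟨u, hu⟩ := hunit
  have hinv : (↑u⁻¹ : Matrix (Fin n) (Fin n) ℝ) = Δ⁻¹ := by
    rw [Matrix.coe_units_inv, hu]
  have heq : L * U = Δ * (Bᵀ * B) * Δ⁻¹ := by
    have h1 : (L * U) * Δ * Δ⁻¹ = Δ * (Bᵀ * B) * Δ⁻¹ := by rw [key]
    rwa [Matrix.mul_assoc (L * U) Δ Δ⁻¹, Matrix.mul_nonsing_inv Δ hdet,
      Matrix.mul_one] at h1
  refine ⟨heq, ?_⟩
  rw [heq, ← hinv, ← hu]
  exact spectrum.units_conjugate
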